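/- For any linear constraint set B = {p ∈ 𝕡_Ω : 𝔼_p[E] = c} with |Ω| ≥ 3 and suitable E, c, the set of maximal elements of the uncertainty (reverse majorization) preorder restricted to B can be uncountable; concretely, for |Ω| = 3, E(x₁)=1, E(x₂)=−1, E(x₃)=0, c=1/4, the distributions p_λ = (1/8)(5−λ, 3−λ, 2λ) for λ ∈ [1, 5/3] are all maximal in B with respect to ≼_U. -/
import Mathlib

open Real

/-- The sum of the `i` largest components of `p`. -/
noncomputable def topSum3 (p : Fin 3 → ℝ) (i : ℕ) : ℝ :=
  sSup {t | ∃ s : Finset (Fin 3), s.card = i ∧ ∑ j ∈ s, p j = t}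

/-- The uncertainty preorder on distributions over three outcomes: partial sums of the
decreasing rearrangement of `q` are below those of `p` for `i = 1, 2`. -/
noncomputable def precU3 (p q : Fin 3 → ℝ) : Prop :=
  ∀ i, 1 ≤ i → i ≤ 2 → topSum3 q i ≤ topSum3 p i

/-- The energy function `E(x₁) = 1, E(x₂) = -1, E(x₃) = 0`. -/
noncomputable def E13 : Fin 3 → ℝ := ![1, -1, 0]

/-- The linearly constrained set `B = {p ∈ 𝕡_Ω | 𝔼_p[E] = 1/4}`. -/
noncomputable def B13 : Set (Fin 3 → ℝ) :=
  {p | (∀ i, 0 ≤ p i) ∧ (∑ i, p i) = 1 ∧ (∑ i, p i * E13 i) = 1/4}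

lemma topSum3_one (p : Fin 3 → ℝ) :
    topSum3 p 1 = max (p 0) (max (p 1) (p 2)) := by
  apply IsGreatest.csSup_eq
  constructor
  · rcases max_choice (p 1) (p 2) with h | h <;> rw [h] <;>
      rcases max_choice (p 0) _ with h2 | h2 <;> rw [h2]
    · exact ⟨{0}, by simp⟩
    · exact ⟨{1}, by simp⟩
    · exact ⟨{0}, by simp⟩
    · exact ⟨{2}, by simp⟩
  · rintro t ⟨s, hs, rfl⟩
    obtain ⟨a, rfl⟩ := Finset.card_eq_one.mp hs
    fin_cases a <;> simp [le_max_iff]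

lemma topSum3_two (p : Fin 3 → ℝ) :
    topSum3 p 2 = max (p 0 + p 1) (max (p 0 + p 2) (p 1 + p 2)) := by
  apply IsGreatest.csSup_eq
  constructor
  · rcases max_choice (p 0 + p 2) (p 1 + p 2) with h | h <;> rw [h] <;>
      rcases max_choice (p 0 + p 1) _ with h2 | h2 <;> rw [h2]
    · exact ⟨{0, 1}, by decide, by rw [Finset.sum_pair (by decide)]⟩
    · exact ⟨{0, 2}, by decide, by rw [Finset.sum_pair (by decide)]⟩
    · exact ⟨{0, 1}, by decide, by rw [Finset.sum_pair (by decide)]⟩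
    · exact ⟨{1, 2}, by decide, by rw [Finset.sum_pair (by decide)]⟩
  · rintro t ⟨s, hs, rfl⟩
    obtain ⟨a, b, hab, rfl⟩ := Finset.card_eq_two.mp hs
    rw [Finset.sum_pair hab]
    fin_cases a <;> fin_cases b <;> simp_all [le_max_iff] <;>
      first
      | (left; linarith)
      | (right; left; linarith)
      | (right; right; linarith)

/-- Every `p_λ = (1/8)(5-λ, 3-λ, 2λ)` with `λ ∈ [1, 5/3]` lies in `B` and is
maximal in `(B, ≼_U)`; in particular uncountably many maximal elements exist. -/
theorem uncountably_many_maximal_elements_under_linear_constraint :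
    ∀ l ∈ Set.Icc (1:ℝ) (5/3),
      (fun j : Fin 3 => (1/8) * (if j.val = 0 then 5 - l else if j.val = 1 then 3 - l
        else 2 * l)) ∈ B13 ∧
      ¬ ∃ q ∈ B13,
        precU3 (fun j : Fin 3 => (1/8) * (if j.val = 0 then 5 - l else if j.val = 1 then 3 - l
          else 2 * l)) q ∧
        ¬ precU3 q (fun j : Fin 3 => (1/8) * (if j.val = 0 then 5 - l else if j.val = 1 then 3 - l
          else 2 * l)) := by
  rintro l ⟨hl1, hl2⟩
  set P : Fin 3 → ℝ := fun j : Fin 3 => (1/8) * (if j.val = 0 then 5 - l else if j.val = 1 then 3 - l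
    else 2 * l) with hP
  have hP0 : P 0 = (5 - l) / 8 := by simp [hP]; ring
  have hP1 : P 1 = (3 - l) / 8 := by simp [hP]; ring
  have hP2 : P 2 = l / 4 := by simp [hP]; ring
  constructor
  · refine ⟨?_, ?_, ?_⟩
    · intro i
      fin_cases i <;> simp [hP] <;> linarith
    · rw [Fin.sum_univ_three, hP0, hP1, hP2]; ring
    · rw [Fin.sum_univ_three, hP0, hP1, hP2]
      simp [E13]; ring
  · rintro ⟨q, ⟨hq0, hq1, hqE⟩, hpq, hnq⟩
    rw [Fin.sum_univ_three] at hq1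
    rw [Fin.sum_univ_three] at hqE
    simp [E13] at hqE
    -- q 0 = q 1 + 1/4, q 2 = 3/4 - 2 * q 1
    have h1 := hpq 1 (by norm_num) (by norm_num)
    have h2 := hpq 2 (by norm_num) (by norm_num)
    rw [topSum3_one, topSum3_one, hP0, hP1, hP2] at h1
    rw [topSum3_two, topSum3_two, hP0, hP1, hP2] at h2
    have hPmax1 : max ((5-l)/8) (max ((3-l)/8) (l/4)) = (5-l)/8 := by
      rw [max_eq_right (by linarith : (3-l)/8 ≤ l/4), max_eq_left (by linarith)]
    have hPmax2 : max ((5-l)/8 + (3-l)/8) (max ((5-l)/8 + l/4) ((3-l)/8 + l/4)) = (5-l)/8 + l/4 := by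
      rw [max_eq_left (by linarith : (3-l)/8 + l/4 ≤ (5-l)/8 + l/4), max_eq_right (by linarith)]
    rw [hPmax1] at h1
    rw [hPmax2] at h2
    rw [max_le_iff, max_le_iff] at h1 h2
    obtain ⟨h1a, h1b, h1c⟩ := h1
    obtain ⟨h2a, h2b, h2c⟩ := h2
    have e0 : q 0 = P 0 := by rw [hP0]; linarith
    have e1 : q 1 = P 1 := by rw [hP1]; linarith
    have e2 : q 2 = P 2 := by rw [hP2]; linarith
    have hqP : q = P := by
      funext j; fin_cases j <;> assumption
    exact hnq (hqP ▸ hpq)
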